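/- Let A ∈ M_2(ℂ) be upper triangular, let S ∈ M_2(ℂ) be Hermitian and upper triangular (hence diagonal with real entries) with Re(A) ≤ S, and let B ∈ M_2(ℂ) be strictly upper triangular with ‖B‖ ≤ 1. Then |Tr(A B*)| ≤ Tr(S) − Re(Tr(A)). -/

import Mathlib

open Matrix
open scoped Matrix.Norms.L2Operator ComplexOrder

lemma bohr_aux (A S : Matrix (Fin 2) (Fin 2) ℂ)
    (hA10 : A 1 0 = 0) (hS01 : S 0 1 = 0) (hS10 : S 1 0 = 0)
    (hAS : (S - (2 : ℂ)⁻¹ • (A + Aᴴ)).PosSemidef) :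
    ‖A 0 1‖ ≤ S.trace.re - A.trace.re := by
  set a := A 0 1 with ha
  set r := ‖a‖ with hr
  set T := S.trace.re - A.trace.re with hT
  have hrT : ∀ z : ℂ, ((2:ℂ)⁻¹ * (z + star z)).re = z.re := by
    intro z
    have h2 : ((2:ℂ)⁻¹ : ℂ) = ((2⁻¹ : ℝ) : ℂ) := by norm_num
    rw [h2, Complex.re_ofReal_mul]
    simp [Complex.add_re, Complex.conj_re]
    ring
  have hdiag : ∀ i : Fin 2, 0 ≤ (S i i - (2:ℂ)⁻¹ * (A i i + star (A i i))).re := by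
    intro i
    have h := hAS.dotProduct_mulVec_nonneg (Pi.single i 1)
    have hv : star (Pi.single i (1:ℂ)) ⬝ᵥ ((S - (2 : ℂ)⁻¹ • (A + Aᴴ)) *ᵥ Pi.single i 1)
        = S i i - (2:ℂ)⁻¹ * (A i i + star (A i i)) := by
      fin_cases i <;>
        simp [dotProduct, Matrix.mulVec, Fin.sum_univ_two, Matrix.sub_apply, Matrix.smul_apply,
          Matrix.add_apply, Matrix.conjTranspose_apply, Pi.single_apply] <;> ring
    rw [hv] at h
    exact (Complex.le_def.mp h).1
  have hT0 : 0 ≤ T := by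
    have h0 := hdiag 0
    have h1 := hdiag 1
    have e0 : (S 0 0 - (2:ℂ)⁻¹ * (A 0 0 + star (A 0 0))).re = S.trace.re - A.trace.re
        - ((S 1 1 - (2:ℂ)⁻¹ * (A 1 1 + star (A 1 1))).re) := by
      simp [Matrix.trace, Fin.sum_univ_two, Complex.sub_re, Complex.add_re, hrT]
      ring
    rw [e0] at h0
    rw [hT]; linarith
  set x : Fin 2 → ℂ := ![(r:ℂ), star a] with hx
  set W : ℂ := (S 1 1 - (2:ℂ)⁻¹ * (A 1 1 + star (A 1 1)))
      + (S 0 0 - (2:ℂ)⁻¹ * (A 0 0 + star (A 0 0))) with hW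
  have hr2 : a * (starRingEnd ℂ) a = ((r : ℂ))^2 := by
    rw [Complex.mul_conj]
    norm_cast
    exact (Complex.sq_norm a).symm
  have hval : star x ⬝ᵥ ((S - (2 : ℂ)⁻¹ • (A + Aᴴ)) *ᵥ x)
      = ((r:ℂ))^2 * W - ((r:ℂ))^3 := by
    simp only [hx, hW, dotProduct, Matrix.mulVec, Fin.sum_univ_two, Matrix.sub_apply,
      Matrix.smul_apply, Matrix.add_apply, Matrix.conjTranspose_apply, hA10, hS01, hS10,
      Matrix.cons_val_zero, Matrix.cons_val_one, Matrix.head_cons, Pi.star_apply, star_star,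
      Complex.star_def, Complex.conj_ofReal, Complex.conj_conj, map_zero, smul_eq_mul]
    linear_combination (S 1 1 - (2:ℂ)⁻¹*(A 1 1 + (starRingEnd ℂ) (A 1 1)) - (r:ℂ)) * hr2
  have hq := hAS.dotProduct_mulVec_nonneg x
  rw [hval] at hq
  have e1 : ((r:ℂ)^2).re = r^2 := by rw [← Complex.ofReal_pow]; exact Complex.ofReal_re _
  have e2 : ((r:ℂ)^2).im = 0 := by rw [← Complex.ofReal_pow]; exact Complex.ofReal_im _
  have e3 : ((r:ℂ)^3).re = r^3 := by rw [← Complex.ofReal_pow]; exact Complex.ofReal_re _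
  have hre : (0:ℝ) ≤ r^2 * W.re - r^3 := by
    have h := (Complex.le_def.mp hq).1
    simp only [Complex.sub_re, Complex.mul_re, e1, e2, e3, Complex.zero_re] at h
    linarith
  have hWT : W.re = T := by
    simp [hW, hT, Matrix.trace, Fin.sum_univ_two, Complex.sub_re, Complex.add_re, hrT]
    ring
  rw [hWT] at hre
  rcases eq_or_lt_of_le (norm_nonneg a) with h0 | h0
  · have : r = 0 := h0.symm
    rw [this]; exact hT0
  · have h0' : 0 < r := h0
    nlinarith [hre, h0', mul_pos h0' h0']

/-- The improved coefficient estimate in the 2×2 case: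
`|Tr(A Bᴴ)| ≤ Tr S − Re Tr A`. -/
theorem bohr_coefficient_estimate_two_by_two
    (A S B : Matrix (Fin 2) (Fin 2) ℂ)
    (hA_ut : ∀ i j : Fin 2, j < i → A i j = 0)
    (hS_herm : S.IsHermitian)
    (hS_ut : ∀ i j : Fin 2, j < i → S i j = 0)
    (hAS : (S - (2 : ℂ)⁻¹ • (A + Aᴴ)).PosSemidef)
    (hB_sut : ∀ i j : Fin 2, j ≤ i → B i j = 0)
    (hB_norm : ‖B‖ ≤ 1) :
    ‖(A * Bᴴ).trace‖ ≤ S.trace.re - A.trace.re := by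
  have hA10 : A 1 0 = 0 := hA_ut 1 0 (by norm_num)
  have hB00 : B 0 0 = 0 := hB_sut 0 0 le_rfl
  have hB10 : B 1 0 = 0 := hB_sut 1 0 (by norm_num)
  have hB11 : B 1 1 = 0 := hB_sut 1 1 le_rfl
  have hS10 : S 1 0 = 0 := hS_ut 1 0 (by norm_num)
  have hS01 : S 0 1 = 0 := by
    have h := hS_herm
    rw [Matrix.IsHermitian] at h
    calc S 0 1 = Sᴴ 0 1 := by rw [h]
      _ = star (S 1 0) := rfl
      _ = 0 := by rw [hS10, star_zero]
  have htr : (A * Bᴴ).trace = A 0 1 * star (B 0 1) := by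
    simp [Matrix.trace, Matrix.mul_apply, Fin.sum_univ_two, Matrix.conjTranspose_apply,
      hA10, hB00, hB10, hB11]
  have hb_le : ‖B 0 1‖ ≤ 1 := by
    have h := B.l2_opNorm_mulVec (EuclideanSpace.single 1 1)
    have hx : ‖(EuclideanSpace.single 1 (1:ℂ) : EuclideanSpace ℂ (Fin 2))‖ = 1 := by
      simp [EuclideanSpace.norm_single]
    have hv : (EuclideanSpace.equiv (Fin 2) ℂ).symm (B *ᵥ (EuclideanSpace.single 1 1))
        = EuclideanSpace.single 0 (B 0 1) := by
      ext i
      fin_cases i <;>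
        simp [EuclideanSpace.equiv, Matrix.mulVec,
          dotProduct, Fin.sum_univ_two, EuclideanSpace.single_apply, hB11]
    rw [hv, hx, mul_one] at h
    calc ‖B 0 1‖ = ‖(EuclideanSpace.single 0 (B 0 1) : EuclideanSpace ℂ (Fin 2))‖ := by
          simp [EuclideanSpace.norm_single]
      _ ≤ 1 := le_trans h hB_norm
  have hkey := bohr_aux A S hA10 hS01 hS10 hAS
  rw [htr, norm_mul]
  have hsb : ‖star (B 0 1)‖ ≤ 1 := by
    rwa [Complex.star_def, Complex.norm_conj]
  calc ‖A 0 1‖ * ‖star (B 0 1)‖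
      ≤ ‖A 0 1‖ * 1 := by
        exact mul_le_mul_of_nonneg_left hsb (norm_nonneg _)
    _ = ‖A 0 1‖ := mul_one _
    _ ≤ _ := hkey
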